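/- arXiv:1110.6380 — 2 statements merged into one kernel-verified Lean document; each statement's English description precedes it below -/
import Mathlib

section
/- Let K be a field and let f, g, τ, x, y ∈ K with x ≠ 0 and y² = x·(x + τ(gτ + 1)(f + τ))·(x + τ²(g + 1)(f + 1)). Set X = y²/x² and Y = y·(x² − τ³(gτ + 1)(f + τ)(g + 1)(f + 1))/x². Then Y² = X·(X² − 2τ(2fgτ + (1 + τ)(gτ + f) + 2τ)·X + τ²(1 − τ)²(gτ − f)²). (This realizes the quotient, computed in Section 6, of the elliptic fibration with reducible fibers 2I₂* on the K3 surface X₍₁₈,₄,₁₎ (case 20a of Section 5) by its van Geemen–Sarti involution σ_t, the quotient fibration being equation (6.2) of the paper.) -/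
set_option maxHeartbeats 2000000


/-- The quotient of the elliptic fibration with reducible fibers 2I₂* on
`X₍₁₈,₄,₁₎` (case 20a of Section 5) by its van Geemen–Sarti involution: the 2-isogeny lands on
the fibration of equation (6.2). -/
theorem stmt3 {K : Type*} [Field K] (f g τ x y : K) (hx : x ≠ 0)
    (hxy : y ^ 2 = x * (x + τ * (g * τ + 1) * (f + τ)) * (x + τ ^ 2 * (g + 1) * (f + 1))) :
    (y * (x ^ 2 - τ ^ 3 * (g * τ + 1) * (f + τ) * (g + 1) * (f + 1)) / x ^ 2) ^ 2 =
      (y ^ 2 / x ^ 2) *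
        ((y ^ 2 / x ^ 2) ^ 2 -
          2 * τ * (2 * f * g * τ + (1 + τ) * (g * τ + f) + 2 * τ) * (y ^ 2 / x ^ 2) +
          τ ^ 2 * (1 - τ) ^ 2 * (g * τ - f) ^ 2) := by
  have h1 : (y * (x ^ 2 - τ ^ 3 * (g * τ + 1) * (f + τ) * (g + 1) * (f + 1)) / x ^ 2) ^ 2
      = y ^ 2 * (x ^ 2 - τ ^ 3 * (g * τ + 1) * (f + τ) * (g + 1) * (f + 1)) ^ 2 / (x ^ 2) ^ 2 := by
    rw [div_pow, mul_pow]
  rw [h1, hxy]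
  have hx2 : x ^ 2 ≠ 0 := pow_ne_zero 2 hx
  field_simp
  ring
end

section
/- Let K = ℂ(f, g, τ) be the field of rational functions in three independent indeterminates f, g, τ over ℂ, and let E be the elliptic curve over K defined by equation (6.2): y² = x(x² − 2τ(2fgτ + (1 + τ)(gτ + f) + 2τ)·x + τ²(1 − τ)²(gτ − f)²). Then E is nonsingular (its discriminant is nonzero) and the group E(K) of K-rational points contains no point of additive order 4. (This is the claim of Section 6 that the quotient fibration (6.2) does not admit a 4-torsion section, so that the torsion coming from the 2-torsion section (0,0) generates a copy of ℤ/2ℤ and not of ℤ/4ℤ in its Mordell–Weil group.) -/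
open MvPolynomial

/-- `K = ℂ(f, g, τ)`, the field of rational functions in three independent indeterminates over
`ℂ`, realized as the fraction field of the polynomial ring `ℂ[f, g, τ]`. -/
abbrev FunField : Type := FractionRing (MvPolynomial (Fin 3) ℂ)

/-- The indeterminate `f` (a modulus of the K3 surface `X₍₁₈,₄,₁₎`). -/
noncomputable def fParam : FunField := algebraMap (MvPolynomial (Fin 3) ℂ) FunField (X 0)

/-- The indeterminate `g` (a modulus of the K3 surface `X₍₁₈,₄,₁₎`). -/
noncomputable def gParam : FunField := algebraMap (MvPolynomial (Fin 3) ℂ) FunField (X 1)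

/-- The indeterminate `τ` (the parameter of the base `ℙ¹` of the fibration). -/
noncomputable def τParam : FunField := algebraMap (MvPolynomial (Fin 3) ℂ) FunField (X 2)

/-- The elliptic curve over `ℂ(f, g, τ)` defined by equation (6.2) of the paper:
`y² = x(x² − 2τ(2fgτ + (1 + τ)(gτ + f) + 2τ)x + τ²(1 − τ)²(gτ − f)²)`. -/
noncomputable def E62 : WeierstrassCurve.Affine FunField :=
  { a₁ := 0
    a₂ := -(2 * τParam * (2 * fParam * gParam * τParam +
      (1 + τParam) * (gParam * τParam + fParam) + 2 * τParam))
    a₃ := 0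
    a₄ := τParam ^ 2 * (1 - τParam) ^ 2 * (gParam * τParam - fParam) ^ 2
    a₆ := 0 }

namespace Stmt7Aux

abbrev R3 : Type := MvPolynomial (Fin 3) ℂ

lemma F_inj : Function.Injective (algebraMap R3 FunField) :=
  IsFractionRing.injective _ _

lemma ne_zero_of_eval {p : R3} (v : Fin 3 → ℂ) (h : eval v p ≠ 0) : p ≠ 0 :=
  fun h0 => h (by rw [h0, map_zero])

lemma Fne {p : R3} (v : Fin 3 → ℂ) (h : eval v p ≠ 0) :
    algebraMap R3 FunField p ≠ 0 :=
  fun h0 => (ne_zero_of_eval v h) (F_inj (by rw [h0, map_zero]))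

lemma not_dvd_of_eval {π q : R3} (v : Fin 3 → ℂ) (hπ : eval v π = 0) (hq : eval v q ≠ 0) :
    ¬ π ∣ q := by
  rintro ⟨k, rfl⟩
  exact hq (by rw [map_mul, hπ, zero_mul])

lemma prime_map {A B : Type*} [CommMonoidWithZero A] [CommMonoidWithZero B]
    (e : A ≃* B) {a : A} (h : Prime (e a)) : Prime a :=
  (MulEquiv.prime_iff e).mp h

lemma prime_X0_add (c : ℂ) : Prime (X 0 + C c : R3) := by
  refine prime_map (MvPolynomial.finSuccEquiv ℂ 2).toRingEquiv.toMulEquiv ?_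
  have h : ((MvPolynomial.finSuccEquiv ℂ 2).toRingEquiv.toMulEquiv) (X 0 + C c : R3)
      = Polynomial.X - Polynomial.C (-(C c : MvPolynomial (Fin 2) ℂ)) := by
    show (MvPolynomial.finSuccEquiv ℂ 2) (X 0 + C c : R3) = _
    have hC : (MvPolynomial.finSuccEquiv ℂ 2) (C c : R3) = Polynomial.C (C c) := by
      simp [MvPolynomial.finSuccEquiv_apply]
    rw [map_add, finSuccEquiv_X_zero, hC, map_neg, sub_neg_eq_add]
  rw [h]
  exact Polynomial.prime_X_sub_C _

lemma prime_X0 : Prime (X 0 : R3) := by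
  have := prime_X0_add 0
  simpa using this

lemma prime_X2 : Prime (X 2 : R3) := by
  refine prime_map (renameEquiv ℂ (Equiv.swap (0 : Fin 3) 2)).toRingEquiv.toMulEquiv ?_
  have h : ((renameEquiv ℂ (Equiv.swap (0 : Fin 3) 2)).toRingEquiv.toMulEquiv) (X 2 : R3)
      = (X 0 : R3) := by
    show rename (Equiv.swap (0 : Fin 3) 2) (X 2 : R3) = X 0
    rw [rename_X, Equiv.swap_apply_right]
  rw [h]
  exact prime_X0

lemma prime_X0_add_one : Prime (X 0 + 1 : R3) := by
  have := prime_X0_add 1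
  simpa using this

lemma descent {π q : R3} (hπ : Prime π) (hq : ¬ π ∣ q) (t : R3) :
    t ≠ 0 → ∀ s : R3, s ^ 2 ≠ π * (q * t ^ 2) := by
  refine wellFounded_dvdNotUnit.induction
    (C := fun t : R3 => t ≠ 0 → ∀ s : R3, s ^ 2 ≠ π * (q * t ^ 2)) t ?_
  intro t ih ht s hs
  have hπ0 : π ≠ 0 := hπ.ne_zero
  have hdvds : π ∣ s := hπ.dvd_of_dvd_pow (show π ∣ s ^ 2 by rw [hs]; exact dvd_mul_right _ _)
  obtain ⟨s₁, rfl⟩ := hdvds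
  have h1 : π * s₁ ^ 2 = q * t ^ 2 := mul_left_cancel₀ hπ0 (by linear_combination hs)
  have hdvdt : π ∣ t := by
    have h2 : π ∣ q * t ^ 2 := ⟨s₁ ^ 2, h1.symm⟩
    rcases hπ.dvd_mul.mp h2 with h | h
    · exact absurd h hq
    · exact hπ.dvd_of_dvd_pow h
  obtain ⟨t₁, rfl⟩ := hdvdt
  have ht₁ : t₁ ≠ 0 := by rintro rfl; simp at ht
  have h3 : s₁ ^ 2 = π * (q * t₁ ^ 2) := mul_left_cancel₀ hπ0 (by linear_combination h1)
  exact ih t₁ ⟨ht₁, π, hπ.not_unit, mul_comm π t₁⟩ ht₁ s₁ h3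

lemma not_square {π q t : R3} (hπ : Prime π) (hq : ¬ π ∣ q) (ht : t ≠ 0) (u : FunField)
    (h : u ^ 2 = algebraMap R3 FunField (π * (q * t ^ 2))) : False := by
  obtain ⟨a, b, hb, hab⟩ := IsFractionRing.div_surjective (A := R3) u
  have hb0 : b ≠ 0 := nonZeroDivisors.ne_zero hb
  have hbF : algebraMap R3 FunField b ≠ 0 := fun h0 => hb0 (F_inj (by rw [h0, map_zero]))
  have key : a ^ 2 = π * (q * (t * b) ^ 2) := by
    apply F_inj
    rw [← hab] at h
    simp only [map_mul, map_pow] at h ⊢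
    field_simp at h
    linear_combination h
  exact descent hπ hq (t * b) (mul_ne_zero ht hb0) a key

end Stmt7Aux

open Stmt7Aux WeierstrassCurve.Affine WeierstrassCurve.Affine.Point

lemma ha1 : E62.a₁ = 0 := rfl
lemma ha3 : E62.a₃ = 0 := rfl
lemma ha6 : E62.a₆ = 0 := rfl

lemma htwo : (2 : FunField) ≠ 0 := by
  rw [show (2 : FunField) = algebraMap R3 FunField 2 from (map_ofNat _ 2).symm]
  exact Fne (fun _ => 0) (by rw [map_ofNat]; norm_num)

lemma hB_ne : E62.a₄ ≠ 0 := by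
  have h : E62.a₄ = algebraMap R3 FunField
      (X 2 ^ 2 * (1 - X 2) ^ 2 * (X 1 * X 2 - X 0) ^ 2) := by
    simp only [E62, fParam, gParam, τParam, map_mul, map_pow, map_sub, map_add, map_one,
      map_ofNat, map_neg]
  rw [h]
  refine Fne ![2, 3, 4] (by simp [Matrix.cons_val]; norm_num)

/-- Any point of order two on `E62` is `(0, 0)`. -/
lemma order2 {x y : FunField} (h : E62.Nonsingular x y)
    (hQ : Point.some _ _ h + Point.some _ _ h = (0 : E62.Point)) : x = 0 ∧ y = 0 := by
  by_cases hy : y = E62.negY x y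
  · simp only [WeierstrassCurve.Affine.negY, ha1, ha3] at hy
    have hy0 : y = 0 := by
      have h2y : 2 * y = 0 := by linear_combination hy
      rcases mul_eq_zero.mp h2y with h' | h'
      · exact absurd h' htwo
      · exact h'
    have heq := (E62.equation_iff x y).mp h.1
    rw [ha1, ha3, ha6, hy0] at heq
    have hfac : x * (x ^ 2 + E62.a₂ * x + E62.a₄) = 0 := by linear_combination -heq
    rcases mul_eq_zero.mp hfac with hx0 | hquad
    · exact ⟨hx0, hy0⟩
    · exfalso
      have hform : (2 * x + E62.a₂) ^ 2 = algebraMap R3 FunField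
          (X 2 * ((16 * ((X 1 * X 2 + 1) * ((X 0 + X 2) * ((X 0 + 1) * (X 1 + 1))))) *
            (X 2) ^ 2)) := by
        have hAB : E62.a₂ ^ 2 - 4 * E62.a₄ = algebraMap R3 FunField
            (X 2 * ((16 * ((X 1 * X 2 + 1) * ((X 0 + X 2) * ((X 0 + 1) * (X 1 + 1))))) *
              (X 2) ^ 2)) := by
          simp only [E62, fParam, gParam, τParam, map_mul, map_pow, map_sub, map_add, map_one,
            map_ofNat, map_neg]
          ring
        rw [← hAB]
        linear_combination 4 * hquad
      exact not_square prime_X2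
        (not_dvd_of_eval ![1, 1, 0] (by simp) (by simp [Matrix.cons_val]))
        (ne_zero_of_eval (fun _ => 1) (by simp)) (2 * x + E62.a₂) hform
  · rw [add_self_of_Y_ne hy] at hQ
    exact absurd hQ (some_ne_zero _)

set_option maxHeartbeats 2000000 in
/-- The curve (6.2) over `ℂ(f, g, τ)` is nonsingular (its discriminant is
nonzero) and its group of rational points contains no point of additive order 4; hence the
quotient fibration (6.2) of Section 6 does not admit a 4-torsion section. -/
theorem stmt7 : E62.Δ ≠ 0 ∧ ∀ P : E62.Point, addOrderOf P ≠ 4 := by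
  constructor
  · have hΔ : E62.Δ = algebraMap R3 FunField
        (256 * X 2 ^ 7 * (1 - X 2) ^ 4 * (X 1 * X 2 - X 0) ^ 4 * (X 1 * X 2 + 1) *
          (X 0 + X 2) * (X 0 + 1) * (X 1 + 1)) := by
      simp only [WeierstrassCurve.Δ, WeierstrassCurve.b₂, WeierstrassCurve.b₄,
        WeierstrassCurve.b₆, WeierstrassCurve.b₈, E62, fParam, gParam, τParam, map_mul,
        map_pow, map_sub, map_add, map_one, map_ofNat, map_neg]
      ring
    rw [hΔ]
    refine Fne ![2, 3, 4] (by simp [Matrix.cons_val]; norm_num)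
  · intro P h4
    have hP0 : P ≠ 0 := by
      intro h; rw [h, addOrderOf_zero] at h4; norm_num at h4
    have h2 : P + P ≠ 0 := by
      intro h
      have hdvd : addOrderOf P ∣ 2 :=
        addOrderOf_dvd_of_nsmul_eq_zero (n := 2) (by rw [two_nsmul]; exact h)
      rw [h4] at hdvd
      norm_num at hdvd
    have h40 : (P + P) + (P + P) = 0 := by
      have hsm : (4 : ℕ) • P = 0 := by rw [← h4]; exact addOrderOf_nsmul_eq_zero P
      calc (P + P) + (P + P) = (4 : ℕ) • P := by abel
        _ = 0 := hsm
    rcases P with _ | @⟨x, y, hns⟩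
    · exact hP0 rfl
    · have hy : y ≠ E62.negY x y := fun hy' => h2 (add_self_of_Y_eq hy')
      rw [add_self_of_Y_ne hy] at h40
      obtain ⟨hx3, -⟩ := order2 _ h40
      -- now extract the coordinates
      have hy0 : y ≠ 0 := by
        intro h0
        apply hy
        simp only [WeierstrassCurve.Affine.negY, ha1, ha3, h0]
        ring
      have h2y : 2 * y ≠ 0 := mul_ne_zero htwo hy0
      have he' : y ^ 2 = x ^ 3 + E62.a₂ * x ^ 2 + E62.a₄ * x := by
        have heq := (E62.equation_iff x y).mp hns.1
        rw [ha1, ha3, ha6] at heq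
        linear_combination heq
      simp only [WeierstrassCurve.Affine.addX, ha1] at hx3
      have hℓ2 : (E62.slope x x y y) ^ 2 = E62.a₂ + 2 * x := by linear_combination hx3
      have hs : E62.slope x x y y = (3 * x ^ 2 + 2 * E62.a₂ * x + E62.a₄) / (2 * y) := by
        rw [slope_of_Y_ne rfl hy]
        simp only [WeierstrassCurve.Affine.negY, ha1, ha3]
        ring_nf
      have hsmul : E62.slope x x y y * (2 * y) = 3 * x ^ 2 + 2 * E62.a₂ * x + E62.a₄ := by
        rw [hs, div_mul_cancel₀ _ h2y]
      have hN : (3 * x ^ 2 + 2 * E62.a₂ * x + E62.a₄) ^ 2 =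
          (E62.a₂ + 2 * x) * (2 * y) ^ 2 := by
        calc (3 * x ^ 2 + 2 * E62.a₂ * x + E62.a₄) ^ 2
            = (E62.slope x x y y * (2 * y)) ^ 2 := by rw [hsmul]
          _ = (E62.a₂ + 2 * x) * (2 * y) ^ 2 := by rw [mul_pow, hℓ2]
      have hsq : (x ^ 2 - E62.a₄) ^ 2 = 0 := by
        linear_combination hN + 4 * (E62.a₂ + 2 * x) * he'
      have hxB : x ^ 2 = E62.a₄ := by
        have := pow_eq_zero_iff (n := 2) (by norm_num) |>.mp hsq
        linear_combination this
      have hxne : x ≠ 0 := by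
        intro h0
        apply hB_ne
        rw [← hxB, h0]
        ring
      -- c is the square root of a₄
      set c : FunField := τParam * (1 - τParam) * (gParam * τParam - fParam) with hcdef
      have hc2 : c ^ 2 = E62.a₄ := by
        simp only [hcdef, E62]
        ring
      have hfac : (x - c) * (x + c) = 0 := by linear_combination hxB - hc2
      rcases mul_eq_zero.mp hfac with hxc | hxc
      · -- x = c
        have hxc' : x = c := by linear_combination hxc
        have hu : (y / x) ^ 2 = E62.a₂ + 2 * c := by
          rw [div_pow]
          rw [div_eq_iff (pow_ne_zero 2 hxne)]
          rw [hxc'] at he' hxB ⊢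
          linear_combination he' - c * hxB
        have hform : E62.a₂ + 2 * c = algebraMap R3 FunField
            (X 2 * ((-(4 * ((X 1 * X 2 + 1) * (X 0 + X 2)))) * (1 : R3) ^ 2)) := by
          simp only [hcdef, E62, fParam, gParam, τParam, map_mul, map_pow, map_sub, map_add,
            map_one, map_ofNat, map_neg]
          ring
        exact absurd (hu.trans hform) (fun hh => not_square prime_X2
          (not_dvd_of_eval ![1, 1, 0] (by simp) (by simp [Matrix.cons_val]))
          one_ne_zero (y / x) hh)
      · -- x = -c
        have hxc' : x = -c := by linear_combination hxc
        have hc2' : c ^ 2 = E62.a₄ := hc2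
        have hu : (y / x) ^ 2 = E62.a₂ - 2 * c := by
          rw [div_pow]
          rw [div_eq_iff (pow_ne_zero 2 hxne)]
          rw [hxc'] at he' ⊢
          linear_combination he' + c * hc2'
        have hform : E62.a₂ - 2 * c = algebraMap R3 FunField
            ((X 0 + 1) * ((-(4 * (X 1 + 1))) * (X 2) ^ 2)) := by
          simp only [hcdef, E62, fParam, gParam, τParam, map_mul, map_pow, map_sub, map_add,
            map_one, map_ofNat, map_neg]
          ring
        exact absurd (hu.trans hform) (fun hh => not_square prime_X0_add_one
          (not_dvd_of_eval ![-1, 0, 1] (by simp) (by norm_num))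
          (ne_zero_of_eval (fun _ => 1) (by simp)) (y / x) hh)
end
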